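/- Let I_1,…,I_n, J ⊆ C be pairwise disjoint finite subsets, I = I_1 ∪ … ∪ I_n, and let vI_s ∈ Seq(I_s) for s ∈ {1,…,n} and vJ ∈ Seq(J). Then for every s ∈ {1,…,n}, the element [f_{vJ}]^{(s)}·(f_{vI_1} ⊗ ⋯ ⊗ f_{vI_n}) lies in U(𝔫)^{⊗n}_{I∪J} and B_{I∪J}(z)( [f_{vJ}]^{(s)}·(f_{vI_1} ⊗ ⋯ ⊗ f_{vI_n}) ) = B_{vI_1,…,vI_n}(t;z) · A_{vJ}(t_J) · ( ∑_{i ∈ I_s, j ∈ J} a(j,i)/(t_j − t_i) + ∑_{j ∈ J} a(j,s)/(t_j − z_s) ) in ℂ(t). -/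

import Mathlib

/- STATEMENT 5.
`U(𝔫)^{⊗n}` is realized as the `n`-fold tensor power `⨂[ℂ] (s : Fin n), FreeAlgebra ℂ C`.
Given pairwise disjoint nodup lists `vI 1, …, vI n` (the sequences `vI_s ∈ Seq(I_s)`) and a
nodup list `vJ ∈ Seq(J)` disjoint from them, the element
`[f_{vJ}]^{(s)}·(f_{vI_1} ⊗ ⋯ ⊗ f_{vI_n})` lies in `U(𝔫)^{⊗n}_{I∪J}` (the span of the tensor
monomials indexed by `Seq^{(n)}(I∪J)`), and the linear map `B_{I∪J}(z)` (determined by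
`f_{w_1}⊗⋯⊗f_{w_n} ↦ ∏_s B_{w_s}(t;z_s)`) sends it to
`B_{vI_1,…,vI_n}(t;z) · A_{vJ}(t_J) · ( ∑_{i∈I_s, j∈J} a(j,i)/(t_j−t_i) + ∑_{j∈J} a(j,s)/(t_j−z_s) )`. -/

noncomputable section
open scoped TensorProduct

abbrev FF (C : Type) := FractionRing (MvPolynomial C ℂ)

def tv {C : Type} (i : C) : FF C := algebraMap (MvPolynomial C ℂ) (FF C) (MvPolynomial.X i)

def cc {C : Type} (w : ℂ) : FF C := algebraMap (MvPolynomial C ℂ) (FF C) (MvPolynomial.C w)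

/-- `A_{vI}(t_I)`. -/
def Afun {C : Type} (a : C → C → ℂ) (l : List C) : FF C :=
  ∏ p : Fin l.length, if p.val = 0 then 1 else
    ∑ q : Fin l.length, if q < p then
      cc (a (l.get p) (l.get q)) / (tv (l.get p) - tv (l.get q)) else 0

/-- `B_{vI}(t_I; z_s)`. -/
def Bfun {C : Type} (a : C → C → ℂ) (b : C → ℂ) (z : ℂ) (l : List C) : FF C :=
  ∏ p : Fin l.length,
    (cc (b (l.get p)) / (tv (l.get p) - cc z)
      + ∑ q : Fin l.length, if q < p then
          cc (a (l.get p) (l.get q)) / (tv (l.get p) - tv (l.get q)) else 0)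

def fgen {C : Type} (i : C) : FreeAlgebra ℂ C := FreeAlgebra.ι ℂ i

/-- The monomial `f_{vI} = f_{i_N}⋯f_{i₁}`. -/
def mono {C : Type} (l : List C) : FreeAlgebra ℂ C := (l.reverse.map fgen).prod

def brktRev {C : Type} : List C → FreeAlgebra ℂ C
  | [] => 0
  | [i] => fgen i
  | i :: tl => ⁅fgen i, brktRev tl⁆

/-- `[f_{vI}]`, inside `U(𝔫)` (bracket = commutator). -/
def brkt {C : Type} (l : List C) : FreeAlgebra ℂ C := brktRev l.reverse

/-- The tensor monomial `f_{w 1} ⊗ ⋯ ⊗ f_{w n} ∈ U(𝔫)^{⊗n}`. -/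
def tmono {C : Type} (n : ℕ) (w : Fin n → List C) :
    ⨂[ℂ] (_s : Fin n), FreeAlgebra ℂ C :=
  PiTensorProduct.tprod ℂ fun s => mono (w s)

/-- `Seq^{(n)}(K)`: `n`-tuples of nodup, pairwise disjoint sequences whose entries exhaust
the finite set `K`. -/
def SeqN {C : Type} [DecidableEq C] (n : ℕ) (K : Finset C) (w : Fin n → List C) : Prop :=
  (∀ t, (w t).Nodup) ∧
    (∀ t t', t ≠ t' → Disjoint (w t).toFinset (w t').toFinset) ∧
    (Finset.univ.biUnion fun t => (w t).toFinset) = K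

namespace St5
variable {C : Type}

def aterm (a : C → C → ℂ) (i j : C) : FF C := cc (a i j) / (tv i - tv j)

def Dsum (a : C → C → ℂ) (j : C) (l : List C) : FF C := (l.map (fun i => aterm a j i)).sum

def Ffun (a : C → C → ℂ) (X : C → FF C) : List C → FF C
  | [] => 1
  | j :: u => X j * Ffun a (fun i => X i + aterm a i j) u

/-- generic product form -/
lemma prod_form_cons (a : C → C → ℂ) (X : C → FF C) (j : C) (u : List C) :
    (∏ p : Fin (j :: u).length, (X ((j :: u).get p) + ∑ q : Fin (j :: u).length,
        if q < p then aterm a ((j :: u).get p) ((j :: u).get q) else 0))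
      = X j * ∏ p : Fin u.length, ((fun i => X i + aterm a i j) (u.get p)
          + ∑ q : Fin u.length, if q < p then aterm a (u.get p) (u.get q) else 0) := by
  simp only [List.length_cons]
  rw [Fin.prod_univ_succ]
  congr 1
  · simp
  · refine Finset.prod_congr rfl fun p _ => ?_
    rw [Fin.sum_univ_succ]
    simp only [Fin.succ_lt_succ_iff, Fin.succ_pos, if_true, List.get_eq_getElem, Fin.val_succ,
      Fin.val_zero, List.getElem_cons_succ, List.getElem_cons_zero]
    ring

lemma Ffun_eq_prod (a : C → C → ℂ) (X : C → FF C) (l : List C) :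
    Ffun a X l = ∏ p : Fin l.length, (X (l.get p) + ∑ q : Fin l.length,
      if q < p then aterm a (l.get p) (l.get q) else 0) := by
  induction l generalizing X with
  | nil => simp [Ffun]
  | cons j u ih => rw [prod_form_cons, Ffun, ih]

lemma Ffun_append (a : C → C → ℂ) (X : C → FF C) (l u : List C) :
    Ffun a X (l ++ u) = Ffun a X l * Ffun a (fun i => X i + Dsum a i l) u := by
  induction l generalizing X with
  | nil => simp [Ffun, Dsum]
  | cons j l' ih =>
    rw [List.cons_append, Ffun, Ffun, ih, mul_assoc]
    have h : (fun i => (fun i => X i + aterm a i j) i + Dsum a i l')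
        = (fun i => X i + Dsum a i (j :: l')) := by
      funext i; simp [Dsum, add_assoc]
    rw [h]

lemma Bfun_eq_Ffun (a : C → C → ℂ) (b : C → ℂ) (z : ℂ) (l : List C) :
    Bfun a b z l = Ffun a (fun i => cc (b i) / (tv i - cc z)) l := by
  rw [Ffun_eq_prod]; rfl

lemma Afun_cons (a : C → C → ℂ) (j : C) (u : List C) :
    Afun a (j :: u) = Ffun a (fun i => aterm a i j) u := by
  rw [Ffun_eq_prod]
  unfold Afun
  simp only [List.length_cons]
  rw [Fin.prod_univ_succ]
  simp only [Fin.val_zero, if_true, reduceIte, one_mul]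
  refine Finset.prod_congr rfl fun p _ => ?_
  rw [if_neg (by simp)]
  rw [Fin.sum_univ_succ]
  simp only [Fin.succ_lt_succ_iff, Fin.succ_pos, if_true, List.get_eq_getElem, Fin.val_succ,
    Fin.val_zero, List.getElem_cons_succ, List.getElem_cons_zero]
  rfl

lemma Afun_nil (a : C → C → ℂ) : Afun a ([] : List C) = 1 := by simp [Afun]

lemma Afun_singleton (a : C → C → ℂ) (j : C) : Afun a [j] = 1 := by
  rw [Afun_cons]; rfl

lemma Ffun_singleton (a : C → C → ℂ) (X : C → FF C) (j : C) :
    Ffun a X [j] = X j := by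
  simp [Ffun]

lemma Afun_append_single (a : C → C → ℂ) (l : List C) (hl : l ≠ []) (j : C) :
    Afun a (l ++ [j]) = Afun a l * Dsum a j l := by
  obtain ⟨i₀, l', rfl⟩ := List.exists_cons_of_ne_nil hl
  rw [List.cons_append, Afun_cons, Afun_cons, Ffun_append, Ffun_singleton]
  simp [Dsum]

lemma mono_append (u v : List C) : mono (u ++ v) = mono v * mono u := by
  simp [mono, List.reverse_append]

lemma mono_singleton (i : C) : mono [i] = fgen i := by simp [mono]

lemma fgen_mul_mono (j : C) (u : List C) : fgen j * mono u = mono (u ++ [j]) := by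
  rw [mono_append, mono_singleton]

lemma mono_mul_fgen (j : C) (u : List C) : mono u * fgen j = mono (j :: u) := by
  rw [show (j :: u) = [j] ++ u from rfl, mono_append, mono_singleton]

def Psi (a : C → C → ℂ) (X : C → FF C) : FreeAlgebra ℂ C →ₗ[ℂ] FF C :=
  (Finsupp.linearCombination ℂ (fun w : FreeMonoid C => Ffun a X w.toList.reverse)) ∘ₗ
    ((MonoidAlgebra.coeffLinearEquiv ℂ).toLinearMap ∘ₗ (FreeAlgebra.equivMonoidAlgebraFreeMonoid (R := ℂ) (X := C)).toLinearMap)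

lemma equiv_mono (u : List C) :
    FreeAlgebra.equivMonoidAlgebraFreeMonoid (R := ℂ) (X := C) (mono u)
      = MonoidAlgebra.single (FreeMonoid.ofList u.reverse) 1 := by
  rw [mono]
  generalize u.reverse = v
  induction v with
  | nil => simp [MonoidAlgebra.one_def]
  | cons i v ih =>
    rw [List.map_cons, List.prod_cons, map_mul, ih]
    have : FreeAlgebra.equivMonoidAlgebraFreeMonoid (R := ℂ) (X := C) (fgen i)
        = MonoidAlgebra.single (FreeMonoid.of i) 1 := by
      simp [fgen, FreeAlgebra.equivMonoidAlgebraFreeMonoid, MonoidAlgebra.of_apply]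
    rw [this, MonoidAlgebra.single_mul_single, one_mul]
    rfl

lemma Psi_mono (a : C → C → ℂ) (X : C → FF C) (u : List C) :
    Psi a X (mono u) = Ffun a X u := by
  rw [Psi, LinearMap.comp_apply, LinearMap.comp_apply]
  erw [equiv_mono, show (MonoidAlgebra.coeffLinearEquiv ℂ)
      (MonoidAlgebra.single (FreeMonoid.ofList u.reverse) (1 : ℂ))
      = Finsupp.single (FreeMonoid.ofList u.reverse) (1 : ℂ) from rfl, Finsupp.linearCombination_single, one_smul]
  congr 1
  simp [FreeMonoid.toList_ofList]

def Sset (m : List C) : Set (FreeAlgebra ℂ C) := {x | ∃ u, u.Perm m ∧ x = mono u}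

lemma Dsum_perm (a : C → C → ℂ) {u v : List C} (h : u.Perm v) (j : C) :
    Dsum a j u = Dsum a j v := (h.map _).sum_eq

lemma aterm_symm {a : C → C → ℂ} (ha : ∀ i j, a i j = a j i) (i j : C) :
    aterm a i j = - aterm a j i := by
  unfold aterm
  rw [ha]
  have h := div_neg_eq_neg_div (R := FF C) (tv j - tv i) (cc (a j i))
  rw [neg_sub] at h
  linear_combination h

lemma sum_map_add' (f g : C → FF C) (m : List C) :
    (m.map (fun i => f i + g i)).sum = (m.map f).sum + (m.map g).sum := by
  induction m with
  | nil => simp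
  | cons i m ih => simp [ih]; ring

lemma map_aterm_sum {a : C → C → ℂ} (ha : ∀ i j, a i j = a j i) (j : C) (m : List C) :
    (m.map (fun i => aterm a i j)).sum = - Dsum a j m := by
  induction m with
  | nil => simp [Dsum]
  | cons i m ih => simp only [Dsum, List.map_cons, List.sum_cons, ih, aterm_symm ha i j]; ring

lemma mul_fgen_mem {m : List C} (j : C) {y : FreeAlgebra ℂ C}
    (hy : y ∈ Submodule.span ℂ (Sset m)) :
    fgen j * y ∈ Submodule.span ℂ (Sset (j :: m)) ∧
      y * fgen j ∈ Submodule.span ℂ (Sset (j :: m)) := by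
  induction hy using Submodule.span_induction with
  | mem x hx =>
    obtain ⟨u, hu, rfl⟩ := hx
    constructor
    · exact Submodule.subset_span
        ⟨u ++ [j], (hu.append_right [j]).trans (List.perm_append_singleton j m),
          fgen_mul_mono j u⟩
    · exact Submodule.subset_span ⟨j :: u, hu.cons j, mono_mul_fgen j u⟩
  | zero => simp
  | add x y hx hy ihx ihy =>
    rw [mul_add, add_mul]
    exact ⟨Submodule.add_mem _ ihx.1 ihy.1, Submodule.add_mem _ ihx.2 ihy.2⟩
  | smul c x hx ihx =>
    rw [mul_smul_comm, smul_mul_assoc]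
    exact ⟨Submodule.smul_mem _ _ ihx.1, Submodule.smul_mem _ _ ihx.2⟩

lemma Psi_fgen_mul {a : C → C → ℂ} {X : C → FF C} {m : List C} (j : C) {y : FreeAlgebra ℂ C}
    (hy : y ∈ Submodule.span ℂ (Sset m)) :
    Psi a X (fgen j * y) = (X j + Dsum a j m) * Psi a X y := by
  induction hy using Submodule.span_induction with
  | mem x hx =>
    obtain ⟨u, hu, rfl⟩ := hx
    rw [fgen_mul_mono, Psi_mono, Psi_mono, Ffun_append, Ffun_singleton,
      Dsum_perm a hu j]
    ring
  | zero => simp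
  | add x y hx hy ihx ihy => rw [mul_add, map_add, map_add, ihx, ihy]; ring
  | smul c x hx ihx => rw [mul_smul_comm, map_smul, ihx, map_smul, mul_smul_comm]

lemma Psi_mul_fgen {a : C → C → ℂ} {X : C → FF C} {m : List C} (j : C) {y : FreeAlgebra ℂ C}
    (hy : y ∈ Submodule.span ℂ (Sset m)) :
    Psi a X (y * fgen j) = X j * Psi a (fun i => X i + aterm a i j) y := by
  induction hy using Submodule.span_induction with
  | mem x hx =>
    obtain ⟨u, hu, rfl⟩ := hx
    rw [mono_mul_fgen, Psi_mono, Psi_mono, Ffun]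
  | zero => simp
  | add x y hx hy ihx ihy => rw [add_mul, map_add, map_add, ihx, ihy]; ring
  | smul c x hx ihx => rw [smul_mul_assoc, map_smul, ihx, map_smul, mul_smul_comm]

lemma key (a : C → C → ℂ) (ha : ∀ i j, a i j = a j i) :
    ∀ m : List C, m ≠ [] →
      brktRev m ∈ Submodule.span ℂ (Sset m) ∧
      ∀ X : C → FF C, Psi a X (brktRev m) = Afun a m.reverse * (m.map X).sum := by
  intro m
  induction m with
  | nil => intro h; exact absurd rfl h
  | cons j m ih =>
    intro _
    rcases m with _ | ⟨i, tl⟩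
    · refine ⟨Submodule.subset_span ⟨[j], List.Perm.refl _, (mono_singleton j).symm⟩, ?_⟩
      intro X
      show Psi a X (fgen j) = _
      rw [← mono_singleton, Psi_mono]
      simp [Ffun, Afun_singleton]
    · obtain ⟨hspan, hval⟩ := ih (by simp)
      have hb : brktRev (j :: i :: tl) = fgen j * brktRev (i :: tl) - brktRev (i :: tl) * fgen j := by
        rw [show brktRev (j :: i :: tl) = ⁅fgen j, brktRev (i :: tl)⁆ from rfl, Ring.lie_def]
      constructor
      · rw [hb]
        exact Submodule.sub_mem _ (mul_fgen_mem j hspan).1 (mul_fgen_mem j hspan).2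
      · intro X
        rw [hb, map_sub, Psi_fgen_mul j hspan, Psi_mul_fgen j hspan, hval X,
          hval (fun i => X i + aterm a i j)]
        rw [sum_map_add', map_aterm_sum ha j (i :: tl)]
        rw [show (j :: i :: tl).reverse = (i :: tl).reverse ++ [j] by simp]
        rw [Afun_append_single a (i :: tl).reverse (by simp) j,
          Dsum_perm a ((i :: tl).reverse_perm) j]
        simp only [List.map_cons, List.sum_cons]
        ring

end St5

set_option maxHeartbeats 1000000 in
open St5 in
theorem statement5 {C : Type} [Fintype C] [DecidableEq C]
    (n : ℕ) (hn : 1 ≤ n) (z : Fin n → ℂ) (hz : Function.Injective z)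
    (a : C → C → ℂ) (ha : ∀ i j, a i j = a j i) (b : C → Fin n → ℂ)
    (vI : Fin n → List C) (hnd : ∀ t, (vI t).Nodup)
    (hdisj : ∀ t t', t ≠ t' → Disjoint (vI t).toFinset (vI t').toFinset)
    (vJ : List C) (hJnd : vJ.Nodup)
    (hJdisj : ∀ t, Disjoint vJ.toFinset (vI t).toFinset)
    (s : Fin n) :
    -- the set `I ∪ J`
    (PiTensorProduct.tprod ℂ fun t =>
        if t = s then brkt vJ * mono (vI t) else mono (vI t)) ∈
      Submodule.span ℂ
        {x | ∃ w : Fin n → List C,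
          SeqN n ((Finset.univ.biUnion fun t => (vI t).toFinset) ∪ vJ.toFinset) w ∧
            x = tmono n w} ∧
    ∀ φ : (⨂[ℂ] (_s : Fin n), FreeAlgebra ℂ C) →ₗ[ℂ] FF C,
      (∀ w : Fin n → List C,
          SeqN n ((Finset.univ.biUnion fun t => (vI t).toFinset) ∪ vJ.toFinset) w →
          φ (tmono n w) = ∏ t, Bfun a (fun i => b i t) (z t) (w t)) →
      φ (PiTensorProduct.tprod ℂ fun t =>
          if t = s then brkt vJ * mono (vI t) else mono (vI t))
        = (∏ t, Bfun a (fun i => b i t) (z t) (vI t)) * Afun a vJ *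
            ((∑ j ∈ vJ.toFinset, ∑ i ∈ (vI s).toFinset, cc (a j i) / (tv j - tv i))
              + ∑ j ∈ vJ.toFinset, cc (b j s) / (tv j - cc (z s))) := by
  classical
  set K := (Finset.univ.biUnion fun t => (vI t).toFinset) ∪ vJ.toFinset with hK
  set base : Fin n → FreeAlgebra ℂ C := fun t => mono (vI t) with hbase
  set L : FreeAlgebra ℂ C →ₗ[ℂ] ⨂[ℂ] (_s : Fin n), FreeAlgebra ℂ C :=
    (PiTensorProduct.tprod ℂ).toLinearMap base s with hL
  set T : FreeAlgebra ℂ C →ₗ[ℂ] ⨂[ℂ] (_s : Fin n), FreeAlgebra ℂ C :=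
    L ∘ₗ LinearMap.mulRight ℂ (mono (vI s)) with hT
  have hE : (PiTensorProduct.tprod ℂ fun t =>
      if t = s then brkt vJ * mono (vI t) else mono (vI t)) = T (brkt vJ) := by
    rw [hT, LinearMap.comp_apply, LinearMap.mulRight_apply, hL,
      MultilinearMap.toLinearMap_apply]
    congr 1
    funext t
    by_cases h : t = s <;> simp [h, Function.update_apply, hbase]
  set X : C → FF C := fun i => cc (b i s) / (tv i - cc (z s)) + Dsum a i (vI s) with hX
  rcases eq_or_ne vJ [] with rfl | hvJ
  · -- vJ = [] case
    have h0 : brkt ([] : List C) = 0 := rfl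
    constructor
    · rw [hE, h0, map_zero]; exact Submodule.zero_mem _
    · intro φ hφ
      rw [hE, h0, map_zero, map_zero]
      simp
  -- main case
  have hm : vJ.reverse ≠ [] := by simp [hvJ]
  obtain ⟨hspanJ, hvalJ⟩ := key a ha vJ.reverse hm
  have hbrkt : brkt vJ = brktRev vJ.reverse := rfl
  -- the mono image computation
  have hmonoT : ∀ u : List C, u.Perm vJ.reverse →
      ∃ w : Fin n → List C, SeqN n K w ∧ T (mono u) = tmono n w ∧
        w = Function.update vI s (vI s ++ u) := by
    intro u hu
    have hperm : u.Perm vJ := hu.trans (List.reverse_perm vJ)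
    have hufin : u.toFinset = vJ.toFinset := List.toFinset_eq_of_perm _ _ hperm
    have hund : u.Nodup := hperm.nodup_iff.mpr hJnd
    have hdisjsu : List.Disjoint (vI s) u := by
      intro x hxvi hxu
      have hx1 : x ∈ vJ.toFinset := by
        rw [← hufin]; exact List.mem_toFinset.mpr hxu
      have hx2 : x ∈ (vI s).toFinset := List.mem_toFinset.mpr hxvi
      exact Finset.disjoint_left.mp (hJdisj s) hx1 hx2
    refine ⟨Function.update vI s (vI s ++ u), ⟨?_, ?_, ?_⟩, ?_, rfl⟩
    · intro t
      by_cases h : t = s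
      · subst h; rw [Function.update_self]
        exact (hnd t).append hund hdisjsu
      · rw [Function.update_of_ne h]; exact hnd t
    · intro t t' htt'
      have hsfin : (vI s ++ u).toFinset = (vI s).toFinset ∪ vJ.toFinset := by
        rw [List.toFinset_append, hufin]
      by_cases ht : t = s
      · subst ht
        rw [Function.update_self, Function.update_of_ne (Ne.symm htt'), hsfin]
        exact Finset.disjoint_union_left.mpr ⟨hdisj t t' htt', hJdisj t'⟩
      · by_cases ht' : t' = s
        · subst ht'
          rw [Function.update_of_ne ht, Function.update_self, hsfin]
          exact (Finset.disjoint_union_left.mpr ⟨hdisj t' t (Ne.symm htt'), hJdisj t⟩).symm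
        · rw [Function.update_of_ne ht, Function.update_of_ne ht']
          exact hdisj t t' htt'
    · ext x
      simp only [Finset.mem_biUnion, Finset.mem_univ, true_and, hK, Finset.mem_union]
      constructor
      · rintro ⟨t, ht⟩
        by_cases h : t = s
        · subst h
          rw [Function.update_self, List.toFinset_append, Finset.mem_union, hufin] at ht
          rcases ht with h1 | h1
          · exact Or.inl ⟨t, h1⟩
          · exact Or.inr h1
        · rw [Function.update_of_ne h] at ht
          exact Or.inl ⟨t, ht⟩
      · rintro (⟨t, ht⟩ | hx)
        · by_cases h : t = s
          · subst h
            exact ⟨t, by rw [Function.update_self, List.toFinset_append]; exact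
              Finset.mem_union_left _ ht⟩
          · exact ⟨t, by rw [Function.update_of_ne h]; exact ht⟩
        · exact ⟨s, by rw [Function.update_self, List.toFinset_append, hufin]; exact
            Finset.mem_union_right _ hx⟩
    · rw [hT, LinearMap.comp_apply, LinearMap.mulRight_apply, ← mono_append, hL,
        MultilinearMap.toLinearMap_apply, tmono]
      congr 1
      funext t
      by_cases h : t = s
      · subst h; rw [Function.update_self, Function.update_self]
      · rw [Function.update_of_ne h, Function.update_of_ne h]
  constructor
  · -- span membership
    rw [hE, hbrkt]
    have hle : Submodule.span ℂ (Sset vJ.reverse) ≤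
        Submodule.comap T (Submodule.span ℂ
          {x | ∃ w : Fin n → List C, SeqN n K w ∧ x = tmono n w}) := by
      rw [Submodule.span_le]
      rintro x ⟨u, hu, rfl⟩
      obtain ⟨w, hw, hTw, -⟩ := hmonoT u hu
      exact Submodule.mem_comap.mpr (hTw ▸ Submodule.subset_span ⟨w, hw, rfl⟩)
    exact hle hspanJ
  · -- value computation
    intro φ hφ
    rw [hE, hbrkt]
    set Poth : FF C := ∏ t ∈ Finset.univ.erase s, Bfun a (fun i => b i t) (z t) (vI t)
      with hPoth
    have claimB : ∀ y ∈ Submodule.span ℂ (Sset vJ.reverse),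
        φ (T y) = Poth * Bfun a (fun i => b i s) (z s) (vI s) * Psi a X y := by
      intro y hy
      induction hy using Submodule.span_induction with
      | mem x hx =>
        obtain ⟨u, hu, rfl⟩ := hx
        obtain ⟨w, hw, hTw, hwdef⟩ := hmonoT u hu
        rw [hTw, hφ w hw]
        rw [← Finset.prod_erase_mul Finset.univ _ (Finset.mem_univ s)]
        have h1 : ∏ t ∈ Finset.univ.erase s, Bfun a (fun i => b i t) (z t) (w t) = Poth := by
          refine Finset.prod_congr rfl fun t ht => ?_
          rw [hwdef, Function.update_of_ne (Finset.ne_of_mem_erase ht)]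
        have h2 : Bfun a (fun i => b i s) (z s) (w s) =
            Bfun a (fun i => b i s) (z s) (vI s) * Psi a X (mono u) := by
          rw [hwdef, Function.update_self, Psi_mono, Bfun_eq_Ffun, Ffun_append,
            ← Bfun_eq_Ffun]
        rw [h1, h2, mul_assoc]
      | zero => simp
      | add x y hx hy ihx ihy => rw [map_add, map_add, map_add, ihx, ihy, mul_add]
      | smul c x hx ihx => rw [map_smul, map_smul, map_smul, ihx, mul_smul_comm]
    rw [claimB _ hspanJ, hvalJ X, List.reverse_reverse]
    have hsum : (vJ.reverse.map X).sum =
        (∑ j ∈ vJ.toFinset, ∑ i ∈ (vI s).toFinset, cc (a j i) / (tv j - tv i))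
          + ∑ j ∈ vJ.toFinset, cc (b j s) / (tv j - cc (z s)) := by
      have hrev : (vJ.reverse.map X).sum = (vJ.map X).sum :=
        ((List.reverse_perm vJ).map X).sum_eq
      rw [hrev, ← List.sum_toFinset X hJnd, hX]
      have h1 : ∀ j ∈ vJ.toFinset, cc (b j s) / (tv j - cc (z s)) + Dsum a j (vI s)
          = (∑ i ∈ (vI s).toFinset, cc (a j i) / (tv j - tv i))
            + cc (b j s) / (tv j - cc (z s)) := by
        intro j hj
        rw [add_comm]
        congr 1
        rw [List.sum_toFinset _ (hnd s)]
        rfl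
      rw [Finset.sum_congr rfl h1, Finset.sum_add_distrib]
    have hprod : Poth * Bfun a (fun i => b i s) (z s) (vI s) =
        ∏ t, Bfun a (fun i => b i t) (z t) (vI t) :=
      Finset.prod_erase_mul Finset.univ (fun t => Bfun a (fun i => b i t) (z t) (vI t))
        (Finset.mem_univ s)
    rw [hsum, ← hprod]
    ring


end
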